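/- Let G=(V,E) be a finite simple graph with a vertex cover C of size τ, let h ∈ ℕ, let U ⊆ C, and let V_U = {x ∈ V∖C : N(x)=U} be the set of vertices of type U. If v ∈ V_U and |V_U| ≥ 2·h^τ + 2, then G admits an h-queue layout if and only if G' = G − {v} admits an h-queue layout. Moreover, every h-queue layout of G' can be extended to an h-queue layout of G in which the relative order of the vertices of G' is unchanged. -/

import Mathlib

/-- An `h`-queue layout of a simple graph `G`: a linear order of the vertices
(given by an injection `f` into `ℕ`) together with an assignment `σ` of edges to
queues `1, …, h` such that no two edges assigned to the same queue nest. -/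
def IsQueueLayout {V : Type*} (G : SimpleGraph V) (h : ℕ)
    (f : V → ℕ) (σ : Sym2 V → Fin h) : Prop :=
  Function.Injective f ∧
    ∀ u v w x : V, G.Adj u v → G.Adj w x → σ s(u, v) = σ s(w, x) →
      ¬ (f u < f w ∧ f w < f x ∧ f x < f v)

/-- `G` admits an `h`-queue layout. -/
def HasQueueLayout {V : Type*} (G : SimpleGraph V) (h : ℕ) : Prop :=
  ∃ (f : V → ℕ) (σ : Sym2 V → Fin h), IsQueueLayout G h f σ

/-- Kernelization lemma: if `C` is a vertex cover of size `τ`, `U ⊆ C`, and `v` is a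
vertex of type `U` (i.e. `v ∉ C` and `N(v) = U`) such that the number of vertices of
type `U` is at least `2·h^τ + 2`, then `G` admits an `h`-queue layout iff `G − v` does;
moreover every `h`-queue layout of `G − v` extends to one of `G` preserving the
relative order of the vertices of `G − v`. -/
theorem kernel_delete_type_vertex {V : Type*} [Fintype V] [DecidableEq V]
    (G : SimpleGraph V) [DecidableRel G.Adj]
    (C : Finset V) (τ h : ℕ)
    (hcover : ∀ u w : V, G.Adj u w → u ∈ C ∨ w ∈ C)
    (hcard : C.card = τ)
    (U : Finset V) (hU : U ⊆ C)
    (v : V) (hvC : v ∉ C) (hvN : G.neighborFinset v = U)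
    (hbig : 2 * h ^ τ + 2 ≤
      (Finset.univ.filter (fun x : V => x ∉ C ∧ G.neighborFinset x = U)).card) :
    (HasQueueLayout G h ↔ HasQueueLayout (G.induce {u : V | u ≠ v}) h) ∧
    (∀ (f' : {u : V // u ≠ v} → ℕ) (σ' : Sym2 {u : V // u ≠ v} → Fin h),
      IsQueueLayout (G.induce {u : V | u ≠ v}) h f' σ' →
      ∃ (f : V → ℕ) (σ : Sym2 V → Fin h), IsQueueLayout G h f σ ∧
        ∀ a b : {u : V // u ≠ v}, f' a < f' b ↔ f a.val < f b.val) := by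
  classical
  have hUne : ∀ u ∈ U, u ≠ v := fun u hu e => hvC (e ▸ hU hu)
  have hadjU : ∀ (x : V), G.neighborFinset x = U → ∀ u, (G.Adj x u ↔ u ∈ U) := by
    intro x hx u
    rw [← SimpleGraph.mem_neighborFinset, hx]
  have hvS : v ∈ Finset.univ.filter (fun x : V => x ∉ C ∧ G.neighborFinset x = U) := by
    simp [hvC, hvN]
  -- the key extension statement
  have key : ∀ (f' : {u : V // u ≠ v} → ℕ) (σ' : Sym2 {u : V // u ≠ v} → Fin h),
      IsQueueLayout (G.induce {u : V | u ≠ v}) h f' σ' →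
      ∃ (f : V → ℕ) (σ : Sym2 V → Fin h), IsQueueLayout G h f σ ∧
        ∀ a b : {u : V // u ≠ v}, f' a < f' b ↔ f a.val < f b.val := by
    rintro f' σ' ⟨hinj', hnest'⟩
    set S' := (Finset.univ.filter (fun x : V => x ∉ C ∧ G.neighborFinset x = U)).erase v with hS'def
    have hS'card : 2 * h ^ τ + 1 ≤ S'.card := by
      rw [hS'def, Finset.card_erase_of_mem hvS]; omega
    rcases Nat.eq_zero_or_pos h with hh0 | hh0
    · -- h = 0 : no layout of G' is possible, vacuous
      subst hh0
      obtain ⟨w, hw⟩ := Finset.card_pos.mp (show 0 < S'.card by omega)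
      have hwv : w ≠ v := (Finset.mem_erase.mp hw).1
      exact (σ' s(⟨w, hwv⟩, ⟨w, hwv⟩)).elim0
    -- pigeonhole: three type-U vertices with the same queue pattern
    set cl : V → ({x // x ∈ U} → Fin h) := fun w u =>
      if hw : w = v then ⟨0, hh0⟩ else σ' s(⟨w, hw⟩, ⟨u.1, hUne u.1 u.2⟩) with hcl
    have hcard' : (Finset.univ : Finset ({x // x ∈ U} → Fin h)).card * 2 < S'.card := by
      have h1 : Fintype.card ({x // x ∈ U} → Fin h) = h ^ U.card := by
        rw [Fintype.card_fun, Fintype.card_coe, Fintype.card_fin]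
      have h2 : U.card ≤ τ := hcard ▸ Finset.card_le_card hU
      have h3 : h ^ U.card ≤ h ^ τ := Nat.pow_le_pow_right hh0 h2
      rw [Finset.card_univ, h1]; omega
    obtain ⟨y, -, hy⟩ := Finset.exists_lt_card_fiber_of_mul_lt_card_of_maps_to
      (f := cl) (fun a _ => Finset.mem_univ _) hcard'
    set F := S'.filter (fun x => cl x = y) with hFdef
    have hFne : ∀ x ∈ F, x ≠ v := fun x hx =>
      (Finset.mem_erase.mp (Finset.mem_filter.mp hx).1).1
    have hprop : ∀ x ∈ F, x ∉ C ∧ G.neighborFinset x = U := by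
      intro x hx
      have := (Finset.mem_filter.mp ((Finset.mem_erase.mp (Finset.mem_filter.mp hx).1).2)).2
      exact this
    have hclass : ∀ (x) (hx : x ∈ F) (u) (hu : u ∈ U),
        σ' s(⟨x, hFne x hx⟩, ⟨u, hUne u hu⟩) = y ⟨u, hu⟩ := by
      intro x hx u hu
      have h1 : cl x = y := (Finset.mem_filter.mp hx).2
      have h2 := congrFun h1 ⟨u, hu⟩
      rw [hcl] at h2
      simpa [hFne x hx] using h2
    -- extract three distinct elements of F
    obtain ⟨a0, ha0⟩ := Finset.card_pos.mp (show 0 < F.card by omega)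
    obtain ⟨b0, hb0'⟩ := Finset.card_pos.mp
      (show 0 < (F.erase a0).card by rw [Finset.card_erase_of_mem ha0]; omega)
    obtain ⟨c0, hc0'⟩ := Finset.card_pos.mp
      (show 0 < ((F.erase a0).erase b0).card by
        rw [Finset.card_erase_of_mem hb0', Finset.card_erase_of_mem ha0]; omega)
    have hba : b0 ≠ a0 := (Finset.mem_erase.mp hb0').1
    have hb0 : b0 ∈ F := (Finset.mem_erase.mp hb0').2
    have hcb : c0 ≠ b0 := (Finset.mem_erase.mp hc0').1
    have hca : c0 ≠ a0 := (Finset.mem_erase.mp (Finset.mem_erase.mp hc0').2).1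
    have hc0 : c0 ∈ F := (Finset.mem_erase.mp (Finset.mem_erase.mp hc0').2).2
    obtain ⟨w1, w2, w3, hw1, hw2, hw3, h12, h23⟩ :
        ∃ w1 w2 w3 : {u : V // u ≠ v}, w1.1 ∈ F ∧ w2.1 ∈ F ∧ w3.1 ∈ F ∧
          f' w1 < f' w2 ∧ f' w2 < f' w3 := by
      set A : {u : V // u ≠ v} := ⟨a0, hFne a0 ha0⟩
      set B : {u : V // u ≠ v} := ⟨b0, hFne b0 hb0⟩
      set Cc : {u : V // u ≠ v} := ⟨c0, hFne c0 hc0⟩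
      have hAB : f' A ≠ f' B := fun e => hba (congrArg Subtype.val (hinj' e)).symm
      have hAC : f' A ≠ f' Cc := fun e => hca (congrArg Subtype.val (hinj' e)).symm
      have hBC : f' B ≠ f' Cc := fun e => hcb (congrArg Subtype.val (hinj' e)).symm
      rcases Nat.lt_or_ge (f' A) (f' B) with h1 | h1 <;>
        rcases Nat.lt_or_ge (f' A) (f' Cc) with h2 | h2 <;>
          rcases Nat.lt_or_ge (f' B) (f' Cc) with h3 | h3 <;>
            first
            | exact ⟨A, B, Cc, ha0, hb0, hc0, by omega, by omega⟩
            | exact ⟨A, Cc, B, ha0, hc0, hb0, by omega, by omega⟩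
            | exact ⟨B, A, Cc, hb0, ha0, hc0, by omega, by omega⟩
            | exact ⟨B, Cc, A, hb0, hc0, ha0, by omega, by omega⟩
            | exact ⟨Cc, A, B, hc0, ha0, hb0, by omega, by omega⟩
            | exact ⟨Cc, B, A, hc0, hb0, ha0, by omega, by omega⟩
    have hw1C : w1.1 ∉ C := (hprop _ hw1).1
    have hw2C : w2.1 ∉ C := (hprop _ hw2).1
    have hw3C : w3.1 ∉ C := (hprop _ hw3).1
    have hw1U : G.neighborFinset w1.1 = U := (hprop _ hw1).2
    have hw2U : G.neighborFinset w2.1 = U := (hprop _ hw2).2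
    have hw3U : G.neighborFinset w3.1 = U := (hprop _ hw3).2
    have hcl12 : ∀ (u) (hu : u ∈ U),
        σ' s(w1, ⟨u, hUne u hu⟩) = σ' s(w2, ⟨u, hUne u hu⟩) :=
      fun u hu => (hclass w1.1 hw1 u hu).trans (hclass w2.1 hw2 u hu).symm
    have hcl32 : ∀ (u) (hu : u ∈ U),
        σ' s(w3, ⟨u, hUne u hu⟩) = σ' s(w2, ⟨u, hUne u hu⟩) :=
      fun u hu => (hclass w3.1 hw3 u hu).trans (hclass w2.1 hw2 u hu).symm
    -- build the extended layout
    set g : V → {u : V // u ≠ v} := fun x => if hx : x = v then w2 else ⟨x, hx⟩ with hg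
    set f : V → ℕ := fun x => 2 * f' (g x) + (if x = v then 1 else 0) with hf
    set σ : Sym2 V → Fin h := fun e => σ' (e.map g) with hσ
    have hgv : g v = w2 := by simp [hg]
    have hgx : ∀ (x : V) (hx : x ≠ v), g x = ⟨x, hx⟩ := by
      intro x hx; simp [hg, hx]
    have hfv : f v = 2 * f' w2 + 1 := by simp [hf, hgv]
    have hfx : ∀ (x : V) (hx : x ≠ v), f x = 2 * f' ⟨x, hx⟩ := by
      intro x hx; simp [hf, hgx x hx, hx]
    have hfcoe : ∀ a : {u : V // u ≠ v}, f a.1 = 2 * f' a := fun a => hfx a.1 a.2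
    have hσe : ∀ (x z : V), σ s(x, z) = σ' s(g x, g z) := by
      intro x z; rw [hσ]; simp [Sym2.map_pair_eq]
    have hadj' : ∀ (p q : {u : V // u ≠ v}), G.Adj p.1 q.1 →
        (G.induce {u : V | u ≠ v}).Adj p q := fun _ _ hpq => hpq
    refine ⟨f, σ, ⟨?_, ?_⟩, ?_⟩
    · -- injectivity
      intro x z hxz
      by_cases hx : x = v <;> by_cases hz : z = v
      · rw [hx, hz]
      · rw [hx, hfv, hfx z hz] at hxz; omega
      · rw [hz, hfv, hfx x hx] at hxz; omega
      · rw [hfx x hx, hfx z hz] at hxz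
        have : (⟨x, hx⟩ : {u : V // u ≠ v}) = ⟨z, hz⟩ := hinj' (by omega)
        exact congrArg Subtype.val this
    · -- no nesting
      intro a b c d hab hcd hq hlt
      obtain ⟨o1, o2, o3⟩ := hlt
      rw [hσe, hσe] at hq
      by_cases hva : a = v
      · rw [hva] at hab o1 hq
        have hb : b ≠ v := fun e => G.loopless.irrefl v (e ▸ hab)
        have hc : c ≠ v := fun e => lt_irrefl _ (e ▸ o1)
        have hd : d ≠ v := fun e => lt_irrefl _ (o1.trans (e ▸ o2))
        have hbU : b ∈ U := (hadjU v hvN b).mp hab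
        rw [hgv, hgx b hb, hgx c hc, hgx d hd] at hq
        refine hnest' w2 ⟨b, hb⟩ ⟨c, hc⟩ ⟨d, hd⟩
          (hadj' _ _ ((hadjU w2.1 hw2U b).mpr hbU)) (hadj' _ _ hcd) hq ⟨?_, ?_, ?_⟩
        · have e1 := hfv; have e2 := hfx c hc; omega
        · have e1 := hfx c hc; have e2 := hfx d hd; omega
        · have e1 := hfx d hd; have e2 := hfx b hb; omega
      · by_cases hvb : b = v
        · rw [hvb] at hab o3 hq
          have ha : a ≠ v := hva
          have hc : c ≠ v := fun e => lt_irrefl _ ((e ▸ o2).trans o3)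
          have hd : d ≠ v := fun e => lt_irrefl _ (e ▸ o3)
          have haU : a ∈ U := (hadjU v hvN a).mp hab.symm
          rw [hgv, hgx a ha, hgx c hc, hgx d hd] at hq
          by_cases hdw : (⟨d, hd⟩ : {u : V // u ≠ v}) = w2
          · -- d = w2 : use w3
            rw [hdw] at hq
            have hcU : c ∈ U := by
              have : G.Adj w2.1 c := by
                have : G.Adj c d := hcd
                rw [show d = w2.1 from congrArg Subtype.val hdw] at this
                exact this.symm
              exact (hadjU w2.1 hw2U c).mp this
            have hq2 : σ' s(⟨a, ha⟩, w3) = σ' s(⟨c, hc⟩, w2) := by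
              have e1 : σ' s(⟨a, ha⟩, w3) = σ' s(w3, ⟨a, hUne a haU⟩) := by
                rw [Sym2.eq_swap]
              have e2 := hcl32 a haU
              have e3 : σ' s(w2, ⟨a, hUne a haU⟩) = σ' s(⟨a, ha⟩, w2) := by
                rw [Sym2.eq_swap]
              exact ((e1.trans e2).trans e3).trans hq
            refine hnest' ⟨a, ha⟩ w3 ⟨c, hc⟩ w2
              (hadj' _ _ ((hadjU w3.1 hw3U a).mpr haU).symm)
              (hadj' _ _ (by
                have : G.Adj c d := hcd
                rwa [show d = w2.1 from congrArg Subtype.val hdw] at this))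
              hq2 ⟨?_, ?_, ?_⟩
            · have e1 := hfx a ha; have e2 := hfx c hc; omega
            · have e1 := hfx c hc
              have e2 : f d = 2 * f' w2 := by rw [hfx d hd, hdw]
              omega
            · omega
          · -- d ≠ w2
            refine hnest' ⟨a, ha⟩ w2 ⟨c, hc⟩ ⟨d, hd⟩
              (hadj' _ _ ((hadjU w2.1 hw2U a).mpr haU).symm) (hadj' _ _ hcd) hq ⟨?_, ?_, ?_⟩
            · have e1 := hfx a ha; have e2 := hfx c hc; omega
            · have e1 := hfx c hc; have e2 := hfx d hd; omega
            · have e1 := hfx d hd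
              have e2 := hfv
              have e3 : f' ⟨d, hd⟩ ≠ f' w2 := fun e => hdw (hinj' e)
              omega
        · by_cases hvc : c = v
          · rw [hvc] at hcd o1 o2 hq
            have ha : a ≠ v := hva
            have hb : b ≠ v := hvb
            have hd : d ≠ v := fun e => lt_irrefl _ (e ▸ o2)
            have hdU : d ∈ U := (hadjU v hvN d).mp hcd
            rw [hgv, hgx a ha, hgx b hb, hgx d hd] at hq
            by_cases haw : (⟨a, ha⟩ : {u : V // u ≠ v}) = w2
            · -- a = w2 : use w1
              have hbU : b ∈ U := by
                have : G.Adj w2.1 b := by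
                  have : G.Adj a b := hab
                  rwa [show a = w2.1 from congrArg Subtype.val haw] at this
                exact (hadjU w2.1 hw2U b).mp this
              have hq2 : σ' s(w1, ⟨b, hb⟩) = σ' s(w2, ⟨d, hd⟩) := by
                have e1 : σ' s(w1, ⟨b, hb⟩) = σ' s(w2, ⟨b, hb⟩) := hcl12 b hbU
                have e2 : σ' s(w2, ⟨b, hb⟩) = σ' s(⟨a, ha⟩, ⟨b, hb⟩) := by rw [haw]
                exact (e1.trans e2).trans hq
              refine hnest' w1 ⟨b, hb⟩ w2 ⟨d, hd⟩
                (hadj' _ _ ((hadjU w1.1 hw1U b).mpr hbU))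
                (hadj' _ _ ((hadjU w2.1 hw2U d).mpr hdU)) hq2 ⟨?_, ?_, ?_⟩
              · omega
              · have e1 := hfv; have e2 := hfx d hd; omega
              · have e1 := hfx d hd; have e2 := hfx b hb; omega
            · -- a ≠ w2
              refine hnest' ⟨a, ha⟩ ⟨b, hb⟩ w2 ⟨d, hd⟩
                (hadj' _ _ hab) (hadj' _ _ ((hadjU w2.1 hw2U d).mpr hdU)) hq ⟨?_, ?_, ?_⟩
              · have e1 := hfx a ha
                have e2 := hfv
                have e3 : f' ⟨a, ha⟩ ≠ f' w2 := fun e => haw (hinj' e)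
                omega
              · have e1 := hfv; have e2 := hfx d hd; omega
              · have e1 := hfx d hd; have e2 := hfx b hb; omega
          · by_cases hvd : d = v
            · rw [hvd] at hcd o2 o3 hq
              have ha : a ≠ v := hva
              have hb : b ≠ v := hvb
              have hc : c ≠ v := hvc
              have hcU : c ∈ U := (hadjU v hvN c).mp hcd.symm
              rw [hgv, hgx a ha, hgx b hb, hgx c hc] at hq
              by_cases hbw : (⟨b, hb⟩ : {u : V // u ≠ v}) = w2
              · -- b = w2 : use w3
                have haU : a ∈ U := by
                  have : G.Adj w2.1 a := by
                    have : G.Adj a b := hab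
                    rw [show b = w2.1 from congrArg Subtype.val hbw] at this
                    exact this.symm
                  exact (hadjU w2.1 hw2U a).mp this
                have hq2 : σ' s(⟨a, ha⟩, w3) = σ' s(⟨c, hc⟩, w2) := by
                  have e1 : σ' s(⟨a, ha⟩, w3) = σ' s(w3, ⟨a, hUne a haU⟩) := by
                    rw [Sym2.eq_swap]
                  have e2 := hcl32 a haU
                  have e3 : σ' s(w2, ⟨a, hUne a haU⟩) = σ' s(⟨a, ha⟩, ⟨b, hb⟩) := by
                    rw [← hbw, Sym2.eq_swap]
                  exact ((e1.trans e2).trans e3).trans hq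
                refine hnest' ⟨a, ha⟩ w3 ⟨c, hc⟩ w2
                  (hadj' _ _ ((hadjU w3.1 hw3U a).mpr haU).symm)
                  (hadj' _ _ ((hadjU w2.1 hw2U c).mpr hcU).symm) hq2 ⟨?_, ?_, ?_⟩
                · have e1 := hfx a ha; have e2 := hfx c hc; omega
                · have e1 := hfx c hc
                  have e2 := hfv
                  have e3 : f' ⟨c, hc⟩ ≠ f' w2 := by
                    intro e
                    have : (⟨c, hc⟩ : {u : V // u ≠ v}) = w2 := hinj' e
                    have : c ∈ C := hU hcU
                    rw [show c = w2.1 from congrArg Subtype.val (hinj' e)] at this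
                    exact hw2C this
                  omega
                · omega
              · -- b ≠ w2
                refine hnest' ⟨a, ha⟩ ⟨b, hb⟩ ⟨c, hc⟩ w2
                  (hadj' _ _ hab) (hadj' _ _ ((hadjU w2.1 hw2U c).mpr hcU).symm) hq ⟨?_, ?_, ?_⟩
                · have e1 := hfx a ha; have e2 := hfx c hc; omega
                · have e1 := hfx c hc
                  have e2 := hfv
                  have e3 : f' ⟨c, hc⟩ ≠ f' w2 := by
                    intro e
                    have : c ∈ C := hU hcU
                    rw [show c = w2.1 from congrArg Subtype.val (hinj' e)] at this
                    exact hw2C this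
                  omega
                · have e1 := hfv; have e2 := hfx b hb
                  have e3 : f' ⟨b, hb⟩ ≠ f' w2 := fun e => hbw (hinj' e)
                  omega
            · -- none is v
              have ha : a ≠ v := hva
              have hb : b ≠ v := hvb
              have hc : c ≠ v := hvc
              have hd : d ≠ v := hvd
              rw [hgx a ha, hgx b hb, hgx c hc, hgx d hd] at hq
              refine hnest' ⟨a, ha⟩ ⟨b, hb⟩ ⟨c, hc⟩ ⟨d, hd⟩
                (hadj' _ _ hab) (hadj' _ _ hcd) hq ⟨?_, ?_, ?_⟩
              · have e1 := hfx a ha; have e2 := hfx c hc; omega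
              · have e1 := hfx c hc; have e2 := hfx d hd; omega
              · have e1 := hfx d hd; have e2 := hfx b hb; omega
    · -- order preserving
      intro a b
      rw [hfcoe a, hfcoe b]
      omega
  refine ⟨⟨?_, ?_⟩, key⟩
  · rintro ⟨f, σ, hinj, hnest⟩
    refine ⟨fun a => f a.1, fun e => σ (e.map Subtype.val),
      fun a b hab => Subtype.ext (hinj hab), ?_⟩
    intro p q r s hpq hrs hq
    exact hnest p.1 q.1 r.1 s.1 hpq hrs (by simpa [Sym2.map_pair_eq] using hq)
  · rintro ⟨f', σ', hL⟩
    obtain ⟨f, σ, hQL, -⟩ := key f' σ' hL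
    exact ⟨f, σ, hQL⟩
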